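/- Let s ≥ 2 be an integer and let n be an integer with n ≥ 3 satisfying 2^{1/n}·n^{q_s/n} ≤ 1 + 1/s, where q_s = max{7, s}. Then there are no integers b ≥ 2 and q with 3 ≤ q ≤ q_s satisfying n·s^n = b·(b^{q−2} + b^{q−3} + ⋯ + b + 1). -/
import Mathlib

private lemma geom_ub (b : ℕ) (hb : 2 ≤ b) :
    ∀ m : ℕ, ∑ j ∈ Finset.range (m + 1), b ^ j ≤ 2 * b ^ m := by
  intro m
  induction m with
  | zero => simp
  | succ m ih =>
      rw [Finset.sum_range_succ]
      have h1 : 2 * b ^ m ≤ b ^ (m + 1) := by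
        calc 2 * b ^ m = b ^ m * 2 := by ring
          _ ≤ b ^ m * b := Nat.mul_le_mul_left _ hb
          _ = b ^ (m + 1) := (pow_succ b m).symm
      omega

/-- Let `s ≥ 2` and let `n ≥ 3` satisfy `2^{1/n}·n^{q_s/n} ≤ 1 + 1/s` where
`q_s = max{7, s}`.  Then there are no integers `b ≥ 2` and `3 ≤ q ≤ q_s` with
`n·s^n = b·(b^{q−2} + ⋯ + b + 1)`. -/
theorem no_solutions_large_n (s n : ℕ) (hs : 2 ≤ s) (hn : 3 ≤ n)
    (hbound : (2 : ℝ) ^ ((1 : ℝ) / n) * (n : ℝ) ^ ((max 7 s : ℝ) / n) ≤ 1 + 1 / s) :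
    ¬ ∃ b q : ℕ, 2 ≤ b ∧ 3 ≤ q ∧ q ≤ max 7 s ∧
      n * s ^ n = b * ∑ j ∈ Finset.range (q - 1), b ^ j := by
  rintro ⟨b, q, hb2, hq3, hqQ, heq⟩
  set Q : ℕ := max 7 s with hQdef
  have hn0 : n ≠ 0 := by omega
  have hnpos : 0 < n := by omega
  have hs0 : 0 < s := by omega
  obtain ⟨m, rfl⟩ : ∃ m, q = m + 3 := ⟨q - 3, by omega⟩
  have hq1 : m + 3 - 1 = m + 2 := by omega
  rw [hq1] at heq
  set S := ∑ j ∈ Finset.range (m + 2), b ^ j with hS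
  have hbpos : 0 < b := by omega
  have hSub : S ≤ 2 * b ^ (m + 1) := geom_ub b hb2 (m + 1)
  have hT1 : 1 ≤ ∑ j ∈ Finset.range (m + 1), b ^ j := by
    calc 1 = b ^ 0 := (pow_zero b).symm
      _ ≤ ∑ j ∈ Finset.range (m + 1), b ^ j :=
        Finset.single_le_sum (f := fun j => b ^ j) (fun i _ => Nat.zero_le _)
          (Finset.mem_range.mpr (Nat.succ_pos m))
  have hSlb : b ^ (m + 1) < S := by
    rw [hS, Finset.sum_range_succ]
    omega
  have hcop : Nat.Coprime b S := by
    have h1 : S = b * (∑ j ∈ Finset.range (m + 1), b ^ j) + 1 := geom_sum_succ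
    rw [h1]
    have := (Nat.coprime_add_mul_left_right b 1 (∑ j ∈ Finset.range (m + 1), b ^ j)).mpr
      (Nat.coprime_one_right b)
    rwa [add_comm] at this
  -- split s = d * e
  set d : ℕ := Nat.gcd s b with hd
  set e : ℕ := Nat.gcd s S with he
  have hsbS : s ∣ b * S := by
    rw [← heq]
    exact (dvd_pow_self s hn0).trans (dvd_mul_left _ n)
  have hsplit : d * e = s :=
    (Nat.gcd_mul_gcd_eq_iff_dvd_mul_of_coprime hcop).mpr hsbS
  have hdpos : 0 < d := Nat.gcd_pos_of_pos_left b hs0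
  have hepos : 0 < e := Nat.gcd_pos_of_pos_left S hs0
  have hcopde : Nat.Coprime d e :=
    ((hcop.coprime_dvd_left (Nat.gcd_dvd_right s b)).coprime_dvd_right (Nat.gcd_dvd_right s S))
  -- d^n ∣ b
  have hdvdbS : d ^ n ∣ b * S := by
    rw [← heq]
    exact (pow_dvd_pow_of_dvd (Nat.gcd_dvd_left s b) n).trans (dvd_mul_left _ n)
  have hdb : d ^ n ∣ b :=
    ((hcop.coprime_dvd_left (Nat.gcd_dvd_right s b)).pow_left n).dvd_of_dvd_mul_right hdvdbS
  have hedvd : e ^ n ∣ b * S := by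
    rw [← heq]
    exact (pow_dvd_pow_of_dvd (Nat.gcd_dvd_left s S) n).trans (dvd_mul_left _ n)
  have heS : e ^ n ∣ S :=
    ((hcop.symm.coprime_dvd_left (Nat.gcd_dvd_right s S)).pow_left n).dvd_of_dvd_mul_left hedvd
  obtain ⟨a, hba⟩ := hdb
  obtain ⟨c, hSc⟩ := heS
  have hsn : s ^ n = d ^ n * e ^ n := by rw [← hsplit, mul_pow]
  have hac : a * c = n := by
    have h1 : (d ^ n * e ^ n) * (a * c) = (d ^ n * e ^ n) * n := by
      calc (d ^ n * e ^ n) * (a * c) = (d ^ n * a) * (e ^ n * c) := by ring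
        _ = b * S := by rw [hba, hSc]
        _ = n * s ^ n := heq.symm
        _ = (d ^ n * e ^ n) * n := by rw [hsn]; ring
    exact Nat.eq_of_mul_eq_mul_left (by positivity) h1
  have ha0 : 0 < a := by
    rcases Nat.eq_zero_or_pos a with h | h
    · rw [h] at hac; simp at hac; omega
    · exact h
  have hc0 : 0 < c := by
    rcases Nat.eq_zero_or_pos c with h | h
    · rw [h] at hac; simp at hac; omega
    · exact h
  have han : a ≤ n := Nat.le_of_dvd hnpos ⟨c, hac.symm⟩
  -- key natural inequalities
  have hI : b ^ (m + 2) < n * s ^ n := by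
    calc b ^ (m + 2) = b * b ^ (m + 1) := by ring
      _ < b * S := mul_lt_mul_of_pos_left hSlb hbpos
      _ = n * s ^ n := heq.symm
  have hII : n * s ^ n ≤ 2 * b ^ (m + 2) := by
    calc n * s ^ n = b * S := heq
      _ ≤ b * (2 * b ^ (m + 1)) := Nat.mul_le_mul_left _ hSub
      _ = 2 * b ^ (m + 2) := by ring
  have hXpow : (d ^ (m + 1)) ^ n = (d ^ n) ^ (m + 1) := by
    rw [← pow_mul, ← pow_mul, Nat.mul_comm]
  have hXn : (d ^ (m + 1)) ^ n < n * e ^ n := by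
    have h1 : (d ^ n) ^ (m + 2) ≤ b ^ (m + 2) := by
      apply Nat.pow_le_pow_left
      rw [hba]; exact Nat.le_mul_of_pos_right _ ha0
    have h2 : (d ^ n) ^ (m + 2) < n * (d ^ n * e ^ n) := by
      rw [← hsn]; exact lt_of_le_of_lt h1 hI
    have e1 : (d ^ n) ^ (m + 2) = d ^ n * (d ^ n) ^ (m + 1) := by ring
    have e2 : n * (d ^ n * e ^ n) = d ^ n * (n * e ^ n) := by ring
    rw [e1, e2] at h2
    rw [hXpow]
    exact Nat.lt_of_mul_lt_mul_left h2
  have hYn : e ^ n ≤ 2 * n ^ (m + 1) * (d ^ (m + 1)) ^ n := by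
    have h1 : b ^ (m + 2) ≤ (d ^ n) ^ (m + 2) * n ^ (m + 2) := by
      rw [hba, mul_pow]
      exact Nat.mul_le_mul_left _ (Nat.pow_le_pow_left han (m + 2))
    have h2 : n * (d ^ n * e ^ n) ≤ 2 * ((d ^ n) ^ (m + 2) * n ^ (m + 2)) := by
      rw [← hsn]
      exact hII.trans (Nat.mul_le_mul_left 2 h1)
    have e2 : n * (d ^ n * e ^ n) = d ^ n * (n * e ^ n) := by ring
    have e3 : 2 * ((d ^ n) ^ (m + 2) * n ^ (m + 2))
        = d ^ n * (n * (2 * n ^ (m + 1) * (d ^ n) ^ (m + 1))) := by ring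
    rw [e2, e3] at h2
    have h3 := Nat.le_of_mul_le_mul_left h2 (pow_pos hdpos n)
    have h4 := Nat.le_of_mul_le_mul_left h3 hnpos
    rw [hXpow]
    exact h4
  -- move to the reals
  have hnR1 : (1 : ℝ) ≤ (n : ℝ) := by exact_mod_cast Nat.one_le_iff_ne_zero.mpr hn0
  have hsR : (0 : ℝ) < (s : ℝ) := by exact_mod_cast hs0
  have hrpos : (0 : ℝ) < 1 + 1 / (s : ℝ) := by positivity
  have hQcast : (max 7 (s : ℝ)) = ((Q : ℕ) : ℝ) := by
    rw [hQdef]; push_cast; norm_num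
  have hrn : (2 : ℝ) * (n : ℝ) ^ (Q : ℕ) ≤ (1 + 1 / (s : ℝ)) ^ n := by
    have h0 : (0 : ℝ) ≤ (2 : ℝ) ^ ((1 : ℝ) / n) * (n : ℝ) ^ (((Q : ℕ) : ℝ) / n) := by positivity
    rw [hQcast] at hbound
    have h1 := pow_le_pow_left₀ h0 hbound n
    have l1 : ((2 : ℝ) ^ ((1 : ℝ) / n)) ^ n = 2 := by
      rw [← Real.rpow_natCast ((2 : ℝ) ^ ((1 : ℝ) / n)) n,
        ← Real.rpow_mul (by norm_num : (0 : ℝ) ≤ 2),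
        one_div_mul_cancel (Nat.cast_ne_zero.mpr hn0), Real.rpow_one]
    have l2 : ((n : ℝ) ^ (((Q : ℕ) : ℝ) / n)) ^ n = (n : ℝ) ^ (Q : ℕ) := by
      rw [← Real.rpow_natCast ((n : ℝ) ^ (((Q : ℕ) : ℝ) / n)) n,
        ← Real.rpow_mul (Nat.cast_nonneg n),
        div_mul_cancel₀ _ (Nat.cast_ne_zero.mpr hn0), Real.rpow_natCast]
    rwa [mul_pow, l1, l2] at h1
  have hnQ : (n : ℝ) ≤ (n : ℝ) ^ (Q : ℕ) := le_self_pow₀ hnR1 (by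
    have : 7 ≤ Q := le_max_left 7 s
    omega)
  have hm1Q : (n : ℝ) ^ (m + 1) ≤ (n : ℝ) ^ (Q : ℕ) := by
    apply pow_le_pow_right₀ hnR1
    have : m + 3 ≤ Q := hqQ
    omega
  -- real inequalities on X = d^(m+1), Y = e
  have hXr : ((d ^ (m + 1) : ℕ) : ℝ) < (1 + 1 / s) * (e : ℕ) := by
    have h1 : ((d ^ (m + 1) : ℕ) : ℝ) ^ n < (n : ℝ) * ((e : ℕ) : ℝ) ^ n := by
      exact_mod_cast hXn
    have hYnn : (0 : ℝ) ≤ ((e : ℕ) : ℝ) ^ n := by positivity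
    have h3 : ((d ^ (m + 1) : ℕ) : ℝ) ^ n < ((1 + 1 / s) * (e : ℕ)) ^ n := by
      calc ((d ^ (m + 1) : ℕ) : ℝ) ^ n < (n : ℝ) * ((e : ℕ) : ℝ) ^ n := h1
        _ ≤ (2 * (n : ℝ) ^ (Q : ℕ)) * ((e : ℕ) : ℝ) ^ n := by nlinarith
        _ ≤ (1 + 1 / s) ^ n * ((e : ℕ) : ℝ) ^ n := mul_le_mul_of_nonneg_right hrn hYnn
        _ = ((1 + 1 / s) * (e : ℕ)) ^ n := (mul_pow _ _ _).symm
    exact lt_of_pow_lt_pow_left₀ n (by positivity) h3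
  have hYr : ((e : ℕ) : ℝ) ≤ (1 + 1 / s) * (d ^ (m + 1) : ℕ) := by
    have h1 : ((e : ℕ) : ℝ) ^ n ≤ 2 * (n : ℝ) ^ (m + 1) * ((d ^ (m + 1) : ℕ) : ℝ) ^ n := by
      exact_mod_cast hYn
    have hXnn : (0 : ℝ) ≤ ((d ^ (m + 1) : ℕ) : ℝ) ^ n := by positivity
    have h3 : ((e : ℕ) : ℝ) ^ n ≤ ((1 + 1 / s) * (d ^ (m + 1) : ℕ)) ^ n := by
      calc ((e : ℕ) : ℝ) ^ n ≤ 2 * (n : ℝ) ^ (m + 1) * ((d ^ (m + 1) : ℕ) : ℝ) ^ n := h1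
        _ ≤ (2 * (n : ℝ) ^ (Q : ℕ)) * ((d ^ (m + 1) : ℕ) : ℝ) ^ n := by nlinarith
        _ ≤ (1 + 1 / s) ^ n * ((d ^ (m + 1) : ℕ) : ℝ) ^ n := mul_le_mul_of_nonneg_right hrn hXnn
        _ = ((1 + 1 / s) * (d ^ (m + 1) : ℕ)) ^ n := (mul_pow _ _ _).symm
    exact le_of_pow_le_pow_left₀ hn0 (by positivity) h3
  -- convert to natural inequalities
  have hsX : s * d ^ (m + 1) < (s + 1) * e := by
    have h1 : ((s : ℝ)) * (d ^ (m + 1) : ℕ) < (s + 1) * (e : ℕ) := by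
      have h2 := mul_lt_mul_of_pos_left hXr hsR
      calc ((s : ℝ)) * (d ^ (m + 1) : ℕ) < s * ((1 + 1 / s) * (e : ℕ)) := h2
        _ = (s + 1) * (e : ℕ) := by field_simp
    exact_mod_cast h1
  have hsY : s * e ≤ (s + 1) * d ^ (m + 1) := by
    have h1 : ((s : ℝ)) * (e : ℕ) ≤ (s + 1) * (d ^ (m + 1) : ℕ) := by
      have h2 := mul_le_mul_of_nonneg_left hYr (le_of_lt hsR)
      calc ((s : ℝ)) * (e : ℕ) ≤ s * ((1 + 1 / s) * (d ^ (m + 1) : ℕ)) := h2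
        _ = (s + 1) * (d ^ (m + 1) : ℕ) := by field_simp
    exact_mod_cast h1
  -- final case analysis
  have heles : e ≤ s := Nat.le_of_dvd hs0 ⟨d, by rw [mul_comm]; exact hsplit.symm⟩
  rcases lt_trichotomy (d ^ (m + 1)) e with h | h | h
  · -- d^(m+1) < e : get s ≤ d^(m+1), then d*e ≤ d^(m+1) < e ≤ d*e
    have h5 : s ≤ d ^ (m + 1) := by
      have h6 : s * (d ^ (m + 1) + 1) ≤ s * e := Nat.mul_le_mul_left s (by omega)
      have h7 : s * (d ^ (m + 1) + 1) = s * d ^ (m + 1) + s := by ring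
      have h8 : (s + 1) * d ^ (m + 1) = s * d ^ (m + 1) + d ^ (m + 1) := by ring
      omega
    have h9 : d * e ≤ d ^ (m + 1) := by rw [hsplit]; exact h5
    have h10 : e ≤ d * e := Nat.le_mul_of_pos_left e hdpos
    omega
  · -- d^(m+1) = e : d = 1, forcing s = 1
    have hdve : d ∣ e := h ▸ dvd_pow_self d (Nat.succ_ne_zero m)
    have hd1 : d = 1 := Nat.eq_one_of_dvd_one (hcopde ▸ Nat.dvd_gcd dvd_rfl hdve)
    rw [hd1, one_pow] at h
    rw [hd1, one_mul] at hsplit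
    omega
  · -- e < d^(m+1) : get s < e ≤ s
    have h5 : s < e := by
      have h6 : s * (e + 1) ≤ s * d ^ (m + 1) := Nat.mul_le_mul_left s (by omega)
      have h7 : s * (e + 1) = s * e + s := by ring
      have h8 : (s + 1) * e = s * e + e := by ring
      omega
    omega
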